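/- arXiv:1011.3761 — 5 statements merged into one kernel-verified Lean document; each statement's English description precedes it below -/
import Mathlib

section
/- (Tangent/Gibbs inequality for the conditional empirical entropy.) Let m* be a |𝒴|×|𝒴|^k matrix with strictly positive entries and let m be any |𝒴|×|𝒴|^k matrix with nonnegative entries. Then H(m) ≤ H(m*) + Σ_{β∈𝒴} Σ_{b∈𝒴^k} λ*_{β,b}·(m_{β,b} − m*_{β,b}), where λ*_{β,b} = log((Σ_{β'∈𝒴} m*_{β',b})/m*_{β,b}). Equivalently, H(m) ≤ Σ_{β,b} λ*_{β,b}·m_{β,b}. -/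
/-- The entropy `𝓗(v)` of the (unnormalized) nonnegative vector `v`:
`𝓗(v) = ∑ i, (v i / ‖v‖₁) * log (‖v‖₁ / v i)` if `v ≠ 0`, and `𝓗(0) = 0`,
where for a vector with nonnegative components `‖v‖₁ = ∑ i, v i`. -/
noncomputable def vecEnt {ι : Type*} [Fintype ι] (v : ι → ℝ) : ℝ :=
  @ite ℝ (v = 0) (Classical.propDecidable _) 0
    (∑ i, (v i / ∑ j, v j) * Real.log ((∑ j, v j) / v i))

/-- Conditional empirical entropy of a `|𝒴| × |𝒴|^k` matrix `m` with nonnegative entries: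
`H(m) = ∑_{b ∈ 𝒴^k} (∑_{β ∈ 𝒴} m_{β,b}) ⬝ 𝓗(m_{·,b})`. -/
noncomputable def condEnt {Y : Type*} [Fintype Y] {k : ℕ} (m : Y → (Fin k → Y) → ℝ) : ℝ :=
  ∑ b : Fin k → Y, (∑ β : Y, m β b) * vecEnt (fun β => m β b)

/-- Gibbs inequality for a single column. -/
lemma gibbs_col {ι : Type*} [Fintype ι] (v w : ι → ℝ) (hw : ∀ i, 0 < w i)
    (hv : ∀ i, 0 ≤ v i) :
    (∑ i, v i) * vecEnt v ≤ ∑ i, Real.log ((∑ j, w j) / w i) * v i := by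
  rw [vecEnt]
  by_cases hv0 : v = 0
  · simp [hv0]
  · rw [if_neg hv0]
    have hex : ∃ i, 0 < v i := by
      by_contra h
      push_neg at h
      exact hv0 (funext fun i => le_antisymm (h i) (hv i))
    have : Nonempty ι := ⟨hex.choose⟩
    have hs : 0 < ∑ i, v i := by
      obtain ⟨i, hi⟩ := hex
      exact Finset.sum_pos' (fun j _ => hv j) ⟨i, Finset.mem_univ i, hi⟩
    have hS : 0 < ∑ j, w j := Finset.sum_pos (fun j _ => hw j) Finset.univ_nonempty
    set s := ∑ i, v i with hsdef
    set S := ∑ j, w j with hSdef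
    have hLHS : s * ∑ i, (v i / s) * Real.log (s / v i)
        = ∑ i, v i * Real.log (s / v i) := by
      rw [Finset.mul_sum]
      congr 1; funext i
      rw [← mul_assoc, mul_div_cancel₀ _ hs.ne']
    rw [hLHS]
    have key : ∀ i, v i * Real.log (s / v i)
        ≤ Real.log (S / w i) * v i + (s * w i / S - v i) := by
      intro i
      rcases eq_or_lt_of_le (hv i) with h0 | hpos
      · rw [← h0]
        have : 0 ≤ s * w i / S := div_nonneg (mul_nonneg hs.le (hw i).le) hS.le
        simp [this]
      · have h1 : Real.log ((s / v i) / (S / w i))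
            = Real.log (s / v i) - Real.log (S / w i) :=
          Real.log_div (div_pos hs hpos).ne' (div_pos hS (hw i)).ne'
        have h2 : Real.log ((s / v i) / (S / w i)) ≤ (s / v i) / (S / w i) - 1 :=
          Real.log_le_sub_one_of_pos (div_pos (div_pos hs hpos) (div_pos hS (hw i)))
        have h3 : v i * (Real.log (s / v i) - Real.log (S / w i))
            ≤ v i * ((s / v i) / (S / w i) - 1) := by
          apply mul_le_mul_of_nonneg_left _ (le_of_lt hpos)
          rw [← h1]; exact h2
        have h4 : v i * ((s / v i) / (S / w i) - 1) = s * w i / S - v i := by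
          field_simp
        nlinarith [h3, h4]
    calc ∑ i, v i * Real.log (s / v i)
        ≤ ∑ i, (Real.log (S / w i) * v i + (s * w i / S - v i)) :=
          Finset.sum_le_sum fun i _ => key i
      _ = (∑ i, Real.log (S / w i) * v i) + ((s * S / S) - s) := by
          rw [Finset.sum_add_distrib, Finset.sum_sub_distrib, ← Finset.sum_div,
            ← Finset.mul_sum]
      _ = ∑ i, Real.log (S / w i) * v i := by
          rw [mul_div_assoc, div_self hS.ne']; ring

/-- `H(m*)` equals the linear form at `m*` for a single positive column. -/
lemma ent_col_eq {ι : Type*} [Fintype ι] [Nonempty ι] (w : ι → ℝ) (hw : ∀ i, 0 < w i) :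
    (∑ i, w i) * vecEnt w = ∑ i, Real.log ((∑ j, w j) / w i) * w i := by
  have hw0 : w ≠ 0 := fun h => (hw (Classical.arbitrary ι)).ne' (congrFun h _)
  have hS : 0 < ∑ j, w j := Finset.sum_pos (fun j _ => hw j) Finset.univ_nonempty
  rw [vecEnt, if_neg hw0, Finset.mul_sum]
  congr 1; funext i
  rw [← mul_assoc, mul_div_cancel₀ _ hS.ne']
  ring

/-- tangent/Gibbs inequality for the conditional empirical entropy:
`H(m) ≤ H(m*) + ∑_{β,b} λ*_{β,b}·(m_{β,b} − m*_{β,b})` with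
`λ*_{β,b} = log((∑_{β'} m*_{β',b}) / m*_{β,b})`; equivalently `H(m) ≤ ∑_{β,b} λ*_{β,b}·m_{β,b}`. -/
theorem stmt6 {Y : Type*} [Fintype Y] [Nonempty Y] (k : ℕ) (hk : 0 < k)
    (mstar m : Y → (Fin k → Y) → ℝ)
    (hms : ∀ β b, 0 < mstar β b) (hm : ∀ β b, 0 ≤ m β b) :
    (condEnt m ≤ condEnt mstar +
        ∑ β : Y, ∑ b : Fin k → Y,
          Real.log ((∑ β' : Y, mstar β' b) / mstar β b) * (m β b - mstar β b)) ∧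
    (condEnt m ≤
        ∑ β : Y, ∑ b : Fin k → Y,
          Real.log ((∑ β' : Y, mstar β' b) / mstar β b) * m β b) := by
  have hmain : condEnt m ≤
      ∑ β : Y, ∑ b : Fin k → Y,
        Real.log ((∑ β' : Y, mstar β' b) / mstar β b) * m β b := by
    rw [Finset.sum_comm, condEnt]
    exact Finset.sum_le_sum fun b _ =>
      gibbs_col (fun β => m β b) (fun β => mstar β b) (fun β => hms β b) (fun β => hm β b)
  have heq : condEnt mstar = ∑ β : Y, ∑ b : Fin k → Y,
      Real.log ((∑ β' : Y, mstar β' b) / mstar β b) * mstar β b := by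
    rw [Finset.sum_comm, condEnt]
    exact Finset.sum_congr rfl fun b _ =>
      ent_col_eq (fun β => mstar β b) (fun β => hms β b)
  refine ⟨?_, hmain⟩
  have : ∑ β : Y, ∑ b : Fin k → Y,
      Real.log ((∑ β' : Y, mstar β' b) / mstar β b) * (m β b - mstar β b)
      = (∑ β : Y, ∑ b : Fin k → Y,
          Real.log ((∑ β' : Y, mstar β' b) / mstar β b) * m β b) - condEnt mstar := by
    rw [heq, ← Finset.sum_sub_distrib]
    congr 1; funext β
    rw [← Finset.sum_sub_distrib]
    congr 1; funext b
    ring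
  rw [this]
  linarith
end

section
/- (Theorem 1, equality of minima.) Let z^n be a minimizer over y^n ∈ 𝒴^n of the cost H(m(y^n)) + α·d_n(x^n,y^n), set m* = m(z^n), assume every entry of m* is strictly positive, and define the coefficients λ_{β,b} = log((Σ_{β'∈𝒴} m*_{β',b})/m*_{β,b}). Then min_{y^n∈𝒴^n} [ Σ_{β∈𝒴} Σ_{b∈𝒴^k} λ_{β,b}·m_{β,b}(y^n) + α·d_n(x^n,y^n) ] = min_{y^n∈𝒴^n} [ H(m(y^n)) + α·d_n(x^n,y^n) ]. -/
/-- The `(k+1)`-th order empirical count matrix of a cyclic sequence `y` of length `n`: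
`m_{β,b}(y^n) = (1/n)·|{1 ≤ i ≤ n : (y_{i−k},…,y_{i−1}) = b and y_i = β}|`,
with indices taken cyclically (modulo `n`). -/
noncomputable def empM {Y : Type*} [Fintype Y] [DecidableEq Y] (n k : ℕ) [NeZero n]
    (y : ZMod n → Y) (β : Y) (b : Fin k → Y) : ℝ :=
  ((Finset.univ.filter (fun i : ZMod n =>
      y i = β ∧ ∀ j : Fin k, y (i - (k : ZMod n) + ((j : ℕ) : ZMod n)) = b j)).card : ℝ) / n

/-- Average per-letter distortion `d_n(x^n, y^n) = (1/n) ∑_{i=1}^n d(x_i, y_i)`. -/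
noncomputable def distn {X Y : Type*} (n : ℕ) [NeZero n] (d : X → Y → ℝ)
    (x : ZMod n → X) (y : ZMod n → Y) : ℝ :=
  (∑ i : ZMod n, d (x i) (y i)) / n

/-- The energy (cost of problem (P1)): `𝓔(y^n) = H(m(y^n)) + α·d_n(x^n, y^n)`. -/
noncomputable def energy {X Y : Type*} [Fintype Y] [DecidableEq Y] (n k : ℕ) [NeZero n]
    (x : ZMod n → X) (α : ℝ) (d : X → Y → ℝ) (y : ZMod n → Y) : ℝ :=
  condEnt (fun β b => empM n k y β b) + α * distn n d x y

/-- The linearized cost (problem (P2)):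
`∑_{β,b} λ_{β,b}·m_{β,b}(y^n) + α·d_n(x^n, y^n)`. -/
noncomputable def linCost {X Y : Type*} [Fintype Y] [DecidableEq Y] (n k : ℕ) [NeZero n]
    (x : ZMod n → X) (α : ℝ) (d : X → Y → ℝ) (lam : Y → (Fin k → Y) → ℝ)
    (y : ZMod n → Y) : ℝ :=
  (∑ β : Y, ∑ b : Fin k → Y, lam β b * empM n k y β b) + α * distn n d x y

/-- The coefficient matrix `Λ(q)` of a positive matrix `q`:
`λ_{β,b} = log((∑_{β'} q_{β',b}) / q_{β,b})`. -/
noncomputable def lamOf {Y : Type*} [Fintype Y] {k : ℕ}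
    (q : Y → (Fin k → Y) → ℝ) (β : Y) (b : Fin k → Y) : ℝ :=
  Real.log ((∑ β' : Y, q β' b) / q β b)


lemma gibbs_ineq {Y : Type*} [Fintype Y] (q m : Y → ℝ) (hq : ∀ β, 0 < q β)
    (hm : ∀ β, 0 ≤ m β) :
    (∑ β, m β) * vecEnt m ≤ ∑ β, Real.log ((∑ β', q β') / q β) * m β := by
  by_cases h0 : m = 0
  · simp [h0, vecEnt]
  · obtain ⟨i, hi⟩ := Function.ne_iff.mp h0
    have hmi : 0 < m i := (hm i).lt_of_ne (Ne.symm hi)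
    set s := ∑ β, m β with hs_def
    set S := ∑ β' : Y, q β' with hS_def
    have hs : 0 < s := Finset.sum_pos' (fun j _ => hm j) ⟨i, Finset.mem_univ i, hmi⟩
    have hS : 0 < S := Finset.sum_pos (fun j _ => hq j) ⟨i, Finset.mem_univ i⟩
    have hL : s * vecEnt m = ∑ β, m β * Real.log (s / m β) := by
      rw [vecEnt, if_neg h0, Finset.mul_sum]
      refine Finset.sum_congr rfl (fun β _ => ?_)
      rw [← mul_assoc, mul_div_cancel₀ _ hs.ne']
    have key : ∀ β, m β - q β * s / S ≤
        Real.log (S / q β) * m β - m β * Real.log (s / m β) := by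
      intro β
      rcases (hm β).eq_or_lt with h | h
      · rw [← h]
        have : 0 < q β * s / S := div_pos (mul_pos (hq β) hs) hS
        simp
        linarith
      · have ht : 0 < S * m β / (q β * s) := div_pos (mul_pos hS h) (mul_pos (hq β) hs)
        have hlog : 1 - (S * m β / (q β * s))⁻¹ ≤ Real.log (S * m β / (q β * s)) := by
          have h2 := Real.log_le_sub_one_of_pos (inv_pos.mpr ht)
          rw [Real.log_inv] at h2
          linarith
        have hsplit : Real.log (S / q β) - Real.log (s / m β)
            = Real.log (S * m β / (q β * s)) := by
          rw [Real.log_div hS.ne' (hq β).ne', Real.log_div hs.ne' h.ne',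
            Real.log_div (mul_pos hS h).ne' (mul_pos (hq β) hs).ne',
            Real.log_mul hS.ne' h.ne', Real.log_mul (hq β).ne' hs.ne']
          ring
        have hinv : (S * m β / (q β * s))⁻¹ = q β * s / (S * m β) := by
          rw [inv_div]
        have h2 : m β * (q β * s / (S * m β)) = q β * s / S := by
          field_simp
        have h1 : m β * (1 - (S * m β / (q β * s))⁻¹)
            ≤ m β * Real.log (S * m β / (q β * s)) :=
          mul_le_mul_of_nonneg_left hlog h.le
        calc m β - q β * s / S = m β * (1 - (S * m β / (q β * s))⁻¹) := by
              rw [hinv, mul_sub, mul_one, h2]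
          _ ≤ m β * Real.log (S * m β / (q β * s)) := h1
          _ = Real.log (S / q β) * m β - m β * Real.log (s / m β) := by
              rw [← hsplit]; ring
    have hsum := Finset.sum_le_sum (fun β (_ : β ∈ Finset.univ) => key β)
    rw [Finset.sum_sub_distrib, Finset.sum_sub_distrib] at hsum
    have hqs : ∑ β, q β * s / S = s := by
      rw [← Finset.sum_div, ← Finset.sum_mul, ← hS_def]
      field_simp
    have hsm : (∑ x : Y, m x) = s := rfl
    rw [hL]
    linarith

lemma gibbs_eq {Y : Type*} [Fintype Y] (q : Y → ℝ) (hq : ∀ β, 0 < q β) :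
    ∑ β, Real.log ((∑ β', q β') / q β) * q β = (∑ β, q β) * vecEnt q := by
  by_cases h0 : q = 0
  · simp [h0, vecEnt]
  · have hs : 0 < ∑ β, q β := by
      obtain ⟨i, hi⟩ := Function.ne_iff.mp h0
      exact Finset.sum_pos' (fun j _ => (hq j).le)
        ⟨i, Finset.mem_univ i, (hq i)⟩
    rw [vecEnt, if_neg h0, Finset.mul_sum]
    refine Finset.sum_congr rfl (fun β _ => ?_)
    rw [← mul_assoc, mul_div_cancel₀ _ hs.ne']
    ring

lemma empM_nonneg {Y : Type*} [Fintype Y] [DecidableEq Y] (n k : ℕ) [NeZero n]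
    (y : ZMod n → Y) (β : Y) (b : Fin k → Y) : 0 ≤ empM n k y β b := by
  unfold empM; positivity

/-- Theorem 1, equality of minima: if `z^n` minimizes
`H(m(y^n)) + α·d_n(x^n,y^n)`, `m* = m(z^n)` has strictly positive entries, and
`λ_{β,b} = log((∑_{β'} m*_{β',b})/m*_{β,b})`, then the minimum over `y^n` of the linearized
cost equals the minimum over `y^n` of the original cost. -/
theorem stmt7 {X Y : Type*} [Fintype X] [Fintype Y] [Nonempty X] [Nonempty Y] [DecidableEq Y]
    (n k : ℕ) [NeZero n] (hk : 0 < k)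
    (x : ZMod n → X) (α : ℝ) (hα : 0 ≤ α)
    (d : X → Y → ℝ) (hd : ∀ a b, 0 ≤ d a b)
    (z : ZMod n → Y)
    (hz : ∀ y : ZMod n → Y, energy n k x α d z ≤ energy n k x α d y)
    (hpos : ∀ (β : Y) (b : Fin k → Y), 0 < empM n k z β b) :
    (⨅ y : ZMod n → Y, linCost n k x α d (lamOf (empM n k z)) y) =
      ⨅ y : ZMod n → Y, energy n k x α d y := by
  classical
  set lam := lamOf (empM n k z) with hlam
  have hGe : ∀ y : ZMod n → Y, energy n k x α d y ≤ linCost n k x α d lam y := by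
    intro y
    unfold energy linCost condEnt
    refine add_le_add ?_ le_rfl
    rw [Finset.sum_comm]
    refine Finset.sum_le_sum (fun b _ => ?_)
    exact gibbs_ineq (fun β => empM n k z β b) (fun β => empM n k y β b)
      (fun β => hpos β b) (fun β => empM_nonneg n k y β b)
  have hEq : linCost n k x α d lam z = energy n k x α d z := by
    unfold energy linCost condEnt
    refine congrArg (· + α * distn n d x z) ?_
    rw [Finset.sum_comm]
    exact Finset.sum_congr rfl (fun b _ =>
      gibbs_eq (fun β => empM n k z β b) (fun β => hpos β b))
  have hminL : ∀ y : ZMod n → Y, linCost n k x α d lam z ≤ linCost n k x α d lam y :=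
    fun y => hEq ▸ le_trans (hz y) (hGe y)
  have hA : (⨅ y : ZMod n → Y, linCost n k x α d lam y) = linCost n k x α d lam z :=
    le_antisymm (ciInf_le (Set.finite_range _).bddBelow z) (le_ciInf hminL)
  have hB : (⨅ y : ZMod n → Y, energy n k x α d y) = energy n k x α d z :=
    le_antisymm (ciInf_le (Set.finite_range _).bddBelow z) (le_ciInf hz)
  rw [hA, hB, hEq]
end

section
/- (Theorem 1, converse inclusion on the optimal type class.) Let z^n be a minimizer over y^n ∈ 𝒴^n of the cost H(m(y^n)) + α·d_n(x^n,y^n), set m* = m(z^n), assume every entry of m* is strictly positive, and define λ_{β,b} = log((Σ_{β'∈𝒴} m*_{β',b})/m*_{β,b}). Then every w^n ∈ 𝒴^n that minimizes H(m(y^n)) + α·d_n(x^n,y^n) and satisfies m(w^n) = m* is also a minimizer of the linearized cost Σ_{β∈𝒴} Σ_{b∈𝒴^k} λ_{β,b}·m_{β,b}(y^n) + α·d_n(x^n,y^n) over y^n ∈ 𝒴^n. -/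
lemma key1 (p q : ℝ) (hp : 0 ≤ p) (hq : 0 < q) : p * Real.log (q / p) ≤ q - p := by
  rcases eq_or_lt_of_le hp with h | h
  · simp [← h]; linarith
  · have h1 : Real.log (q / p) ≤ q / p - 1 :=
      Real.log_le_sub_one_of_pos (div_pos hq h)
    calc p * Real.log (q / p) ≤ p * (q / p - 1) := by
          exact mul_le_mul_of_nonneg_left h1 hp
      _ = q - p := by field_simp

lemma colIneq {Y : Type*} [Fintype Y] [Nonempty Y] (c q : Y → ℝ) (hc : ∀ β, 0 ≤ c β)
    (hq : ∀ β, 0 < q β) :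
    ∑ β, c β * Real.log ((∑ β', c β') / c β) ≤
      ∑ β, c β * Real.log ((∑ β', q β') / q β) := by
  set S : ℝ := ∑ β', c β' with hS
  set Sq : ℝ := ∑ β', q β' with hSq
  have hSq0 : 0 < Sq := Finset.sum_pos (fun i _ => hq i) Finset.univ_nonempty
  have hS0 : 0 ≤ S := Finset.sum_nonneg (fun i _ => hc i)
  have hterm : ∀ β : Y,
      c β * Real.log (S / c β) - c β * Real.log (Sq / q β) ≤ S * q β / Sq - c β := by
    intro β
    rcases eq_or_lt_of_le (hc β) with h | h
    · simp [← h]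
      exact div_nonneg (mul_nonneg hS0 (hq β).le) hSq0.le
    · have hSpos : 0 < S := lt_of_lt_of_le h (Finset.single_le_sum (fun i _ => hc i) (Finset.mem_univ β))
      have hk := key1 (c β) (S * q β / Sq) (hc β)
        (div_pos (mul_pos hSpos (hq β)) hSq0)
      have harg : (S * q β / Sq) / c β = (S / c β) / (Sq / q β) := by
        rw [div_div_div_eq, div_div, div_eq_div_iff (by positivity) (by positivity)]
        ring
      rw [harg, Real.log_div (div_pos hSpos h).ne' (div_pos hSq0 (hq β)).ne'] at hk
      nlinarith [hk]
  have hsum := Finset.sum_le_sum (fun β (_ : β ∈ Finset.univ) => hterm β)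
  have hzero : ∑ β : Y, (S * q β / Sq - c β) = 0 := by
    rw [Finset.sum_sub_distrib]
    have : ∑ β : Y, S * q β / Sq = S := by
      rw [← Finset.sum_div, ← Finset.mul_sum, ← hSq, mul_div_assoc,
        div_self (ne_of_gt hSq0), mul_one]
    rw [this, ← hS, sub_self]
  rw [Finset.sum_sub_distrib] at hsum
  linarith [hsum, hzero.le, hzero.ge]

lemma col_ent {Y : Type*} [Fintype Y] (c : Y → ℝ) (hc : ∀ β, 0 ≤ c β) :
    (∑ β, c β) * vecEnt c = ∑ β, c β * Real.log ((∑ β', c β') / c β) := by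
  unfold vecEnt
  split_ifs with h
  · simp [h]
  · have hS : 0 < ∑ β', c β' := by
      rcases Function.ne_iff.mp h with ⟨β, hβ⟩
      have : 0 < c β := lt_of_le_of_ne (hc β) (Ne.symm hβ)
      exact lt_of_lt_of_le this (Finset.single_le_sum (fun i _ => hc i) (Finset.mem_univ β))
    rw [Finset.mul_sum]
    refine Finset.sum_congr rfl (fun β _ => ?_)
    field_simp

lemma condEnt_le {Y : Type*} [Fintype Y] [Nonempty Y] {k : ℕ}
    (m q : Y → (Fin k → Y) → ℝ) (hm : ∀ β b, 0 ≤ m β b) (hq : ∀ β b, 0 < q β b) :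
    condEnt m ≤ ∑ b : Fin k → Y, ∑ β : Y, lamOf q β b * m β b := by
  unfold condEnt
  refine Finset.sum_le_sum (fun b _ => ?_)
  rw [col_ent (fun β => m β b) (fun β => hm β b)]
  calc ∑ β, m β b * Real.log ((∑ β', m β' b) / m β b)
      ≤ ∑ β, m β b * Real.log ((∑ β', q β' b) / q β b) :=
        colIneq _ _ (fun β => hm β b) (fun β => hq β b)
    _ = ∑ β, lamOf q β b * m β b := by
        refine Finset.sum_congr rfl (fun β _ => ?_)
        rw [lamOf, mul_comm]

lemma condEnt_eq {Y : Type*} [Fintype Y] {k : ℕ}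
    (q : Y → (Fin k → Y) → ℝ) (hq : ∀ β b, 0 < q β b) :
    condEnt q = ∑ b : Fin k → Y, ∑ β : Y, lamOf q β b * q β b := by
  unfold condEnt
  refine Finset.sum_congr rfl (fun b _ => ?_)
  rw [col_ent (fun β => q β b) (fun β => (hq β b).le)]
  refine Finset.sum_congr rfl (fun β _ => ?_)
  rw [lamOf, mul_comm]

/-- Theorem 1, converse inclusion on the optimal type class: with `z^n` a
minimizer of the original cost, `m* = m(z^n)` strictly positive and `λ` the tangent
coefficients at `m*`, every minimizer `w^n` of the original cost with `m(w^n) = m*` is also a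
minimizer of the linearized cost. -/
theorem stmt9 {X Y : Type*} [Fintype X] [Fintype Y] [Nonempty X] [Nonempty Y] [DecidableEq Y]
    (n k : ℕ) [NeZero n] (hk : 0 < k)
    (x : ZMod n → X) (α : ℝ) (hα : 0 ≤ α)
    (d : X → Y → ℝ) (hd : ∀ a b, 0 ≤ d a b)
    (z : ZMod n → Y)
    (hz : ∀ y : ZMod n → Y, energy n k x α d z ≤ energy n k x α d y)
    (hpos : ∀ (β : Y) (b : Fin k → Y), 0 < empM n k z β b)
    (w : ZMod n → Y)
    (hwmin : ∀ y : ZMod n → Y, energy n k x α d w ≤ energy n k x α d y)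
    (hwtype : ∀ (β : Y) (b : Fin k → Y), empM n k w β b = empM n k z β b) :
    ∀ y : ZMod n → Y,
      linCost n k x α d (lamOf (empM n k z)) w ≤ linCost n k x α d (lamOf (empM n k z)) y := by
  intro y
  have hfe : empM n k w = empM n k z := funext fun β => funext fun b => hwtype β b
  have hnn : ∀ (u : ZMod n → Y) (β : Y) (b : Fin k → Y), 0 ≤ empM n k u β b := by
    intro u β b
    exact div_nonneg (Nat.cast_nonneg _) (Nat.cast_nonneg _)
  have h1 : linCost n k x α d (lamOf (empM n k z)) w = energy n k x α d w := by
    unfold linCost energy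
    congr 1
    rw [hfe, Finset.sum_comm]
    exact (condEnt_eq (empM n k z) hpos).symm
  have h2 : energy n k x α d y ≤ linCost n k x α d (lamOf (empM n k z)) y := by
    unfold linCost energy
    refine add_le_add ?_ le_rfl
    calc condEnt (fun β b => empM n k y β b)
        ≤ ∑ b : Fin k → Y, ∑ β : Y, lamOf (empM n k z) β b * empM n k y β b :=
          condEnt_le _ _ (fun β b => hnn y β b) hpos
      _ = ∑ β : Y, ∑ b : Fin k → Y, lamOf (empM n k z) β b * empM n k y β b :=
          Finset.sum_comm
  calc linCost n k x α d (lamOf (empM n k z)) w = energy n k x α d w := h1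
    _ ≤ energy n k x α d y := hwmin y
    _ ≤ linCost n k x α d (lamOf (empM n k z)) y := h2
end

section
/- (Theorem 3, energy decrease of the iterative Viterbi scheme.) Let ŷ ∈ 𝒴^n be such that every entry of m(ŷ) is strictly positive, define the coefficients λ̂_{β,b} = log((Σ_{β'∈𝒴} m_{β',b}(ŷ))/m_{β,b}(ŷ)), and let ỹ ∈ 𝒴^n be any minimizer over z^n ∈ 𝒴^n of the linearized cost Σ_{β∈𝒴} Σ_{b∈𝒴^k} λ̂_{β,b}·m_{β,b}(z^n) + α·d_n(x^n,z^n). Then the energy does not increase: H(m(ỹ)) + α·d_n(x^n,ỹ) ≤ H(m(ŷ)) + α·d_n(x^n,ŷ). -/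
lemma gibbs_col_s10 {Y : Type*} [Fintype Y] [Nonempty Y] (v q : Y → ℝ)
    (hv : ∀ β, 0 ≤ v β) (hq : ∀ β, 0 < q β) :
    (∑ β, v β) * vecEnt v ≤ ∑ β, v β * Real.log ((∑ β', q β') / q β) := by
  by_cases h0 : v = 0
  · simp [h0, vecEnt]
  · have hs : 0 < ∑ β, v β := by
      rcases Function.ne_iff.mp h0 with ⟨β, hβ⟩
      exact Finset.sum_pos' (fun i _ => hv i)
        ⟨β, Finset.mem_univ β, lt_of_le_of_ne (hv β) (Ne.symm hβ)⟩
    set s := ∑ β, v β with hsdef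
    set S := ∑ β' : Y, q β' with hSdef
    have hS : 0 < S := Finset.sum_pos (fun i _ => hq i) Finset.univ_nonempty
    have hLHS : s * vecEnt v = ∑ β, v β * Real.log (s / v β) := by
      rw [vecEnt, if_neg h0, Finset.mul_sum]
      refine Finset.sum_congr rfl fun β _ => ?_
      rw [← hsdef]
      field_simp
    rw [hLHS]
    have key : ∀ β, v β * Real.log (s / v β) - v β * Real.log (S / q β)
        ≤ s * q β / S - v β := by
      intro β
      rcases eq_or_lt_of_le (hv β) with h | h
      · rw [← h]; simp
        exact div_nonneg (mul_nonneg hs.le (hq β).le) hS.le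
      · have hs' : s ≠ 0 := hs.ne'
        have hS' : S ≠ 0 := hS.ne'
        have hvb' : v β ≠ 0 := h.ne'
        have hqb' : q β ≠ 0 := (hq β).ne'
        have h1 : v β * Real.log (s / v β) - v β * Real.log (S / q β)
            = v β * Real.log (s * q β / (S * v β)) := by
          rw [← mul_sub, ← Real.log_div (div_pos hs h).ne' (div_pos hS (hq β)).ne']
          have hd : s / v β / (S / q β) = s * q β / (S * v β) := by
            field_simp
          rw [hd]
        rw [h1]
        have h2 : Real.log (s * q β / (S * v β)) ≤ s * q β / (S * v β) - 1 :=
          Real.log_le_sub_one_of_pos (div_pos (mul_pos hs (hq β)) (mul_pos hS h))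
        calc v β * Real.log (s * q β / (S * v β)) ≤ v β * (s * q β / (S * v β) - 1) :=
              mul_le_mul_of_nonneg_left h2 (le_of_lt h)
          _ = s * q β / S - v β := by field_simp
    have hsum : ∑ β, (s * q β / S - v β) = 0 := by
      rw [Finset.sum_sub_distrib]
      have h1 : ∑ β, s * q β / S = s := by
        rw [← Finset.sum_div, ← Finset.mul_sum, ← hSdef]
        field_simp
      rw [h1, ← hsdef, sub_self]
    have h2 := Finset.sum_le_sum (fun β (_ : β ∈ Finset.univ) => key β)
    rw [Finset.sum_sub_distrib, hsum] at h2
    linarith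

lemma eq_col {Y : Type*} [Fintype Y] [Nonempty Y] (v : Y → ℝ)
    (hv : ∀ β, 0 < v β) :
    (∑ β, v β) * vecEnt v = ∑ β, v β * Real.log ((∑ β', v β') / v β) := by
  have h0 : v ≠ 0 := by
    intro h
    have := hv (Classical.arbitrary Y)
    rw [h] at this
    simp at this
  have hs : 0 < ∑ β, v β := Finset.sum_pos (fun i _ => hv i) Finset.univ_nonempty
  rw [vecEnt, if_neg h0, Finset.mul_sum]
  refine Finset.sum_congr rfl fun β _ => ?_
  field_simp

/-- Theorem 3, energy decrease of the iterative Viterbi scheme: if the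
coefficients are computed at `m(ŷ)` (assumed strictly positive) and `ỹ` minimizes the
resulting linearized cost, then `𝓔(ỹ) ≤ 𝓔(ŷ)`. -/
theorem stmt10 {X Y : Type*} [Fintype X] [Fintype Y] [Nonempty X] [Nonempty Y] [DecidableEq Y]
    (n k : ℕ) [NeZero n] (hk : 0 < k)
    (x : ZMod n → X) (α : ℝ) (hα : 0 ≤ α)
    (d : X → Y → ℝ) (hd : ∀ a b, 0 ≤ d a b)
    (yhat : ZMod n → Y)
    (hpos : ∀ (β : Y) (b : Fin k → Y), 0 < empM n k yhat β b)
    (ytil : ZMod n → Y)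
    (hmin : ∀ z : ZMod n → Y,
      linCost n k x α d (lamOf (empM n k yhat)) ytil ≤
        linCost n k x α d (lamOf (empM n k yhat)) z) :
    energy n k x α d ytil ≤ energy n k x α d yhat := by
  set lam := lamOf (empM n k yhat) with hlam
  have h1 : energy n k x α d ytil ≤ linCost n k x α d lam ytil := by
    unfold energy linCost
    have : condEnt (fun β b => empM n k ytil β b)
        ≤ ∑ β : Y, ∑ b : Fin k → Y, lam β b * empM n k ytil β b := by
      rw [Finset.sum_comm]
      unfold condEnt
      refine Finset.sum_le_sum fun b _ => ?_
      have := gibbs_col_s10 (fun β => empM n k ytil β b) (fun β => empM n k yhat β b)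
        (fun β => empM_nonneg n k ytil β b) (fun β => hpos β b)
      refine this.trans_eq (Finset.sum_congr rfl fun β _ => ?_)
      rw [hlam]
      unfold lamOf
      ring
    linarith
  have h2 : linCost n k x α d lam yhat = energy n k x α d yhat := by
    unfold energy linCost
    have : ∑ β : Y, ∑ b : Fin k → Y, lam β b * empM n k yhat β b
        = condEnt (fun β b => empM n k yhat β b) := by
      rw [Finset.sum_comm]
      unfold condEnt
      refine Finset.sum_congr rfl fun b _ => ?_
      rw [show ((∑ β : Y, empM n k yhat β b) * vecEnt fun β => empM n k yhat β b)
          = ∑ β : Y, empM n k yhat β b *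
              Real.log ((∑ β' : Y, empM n k yhat β' b) / empM n k yhat β b) from
        eq_col (fun β => empM n k yhat β b) (fun β => hpos β b)]
      refine Finset.sum_congr rfl fun β _ => ?_
      rw [hlam]
      unfold lamOf
      ring
    linarith
  calc energy n k x α d ytil ≤ linCost n k x α d lam ytil := h1
    _ ≤ linCost n k x α d lam yhat := hmin yhat
    _ = energy n k x α d yhat := h2
end

section
/- (The continuous relaxation lower-bounds the discrete optimum: Ĉ*_n ≤ C*_n.) Let ℓ ≥ k+1 and let 𝓜 be the set of all probability mass functions p on 𝒳^ℓ × 𝒴^ℓ such that (a) for every a^{ℓ−1} ∈ 𝒳^{ℓ−1} and b^{ℓ−1} ∈ 𝒴^{ℓ−1}, Σ_{a∈𝒳,b∈𝒴} p((a_1,…,a_{ℓ−1},a),(b_1,…,b_{ℓ−1},b)) = Σ_{a∈𝒳,b∈𝒴} p((a,a_1,…,a_{ℓ−1}),(b,b_1,…,b_{ℓ−1})) (joint stationarity), and (b) for every a^ℓ ∈ 𝒳^ℓ, Σ_{b^ℓ∈𝒴^ℓ} p(a^ℓ,b^ℓ) = (1/n)·|{1 ≤ i ≤ n : (x_{i−ℓ+1},…,x_i)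 = a^ℓ}| (consistency with the cyclic ℓ-th order empirical distribution of x^n). For p ∈ 𝓜 define the |𝒴|×|𝒴|^k matrix m(p) by m(p)_{β,b} = Σ_{a^ℓ∈𝒳^ℓ} Σ_{c∈𝒴^{ℓ−k−1}} p(a^ℓ,(b_1,…,b_k,β,c_1,…,c_{ℓ−k−1})), and define q(p)(a,b) = Σ_{a'∈𝒳^{ℓ−1},b'∈𝒴^{ℓ−1}} p((a,a'),(b,b')). Then inf_{p∈𝓜} [ H(m(p)) + α·Σ_{a∈𝒳,b∈𝒴} d(a,b)·q(p)(a,b) ] ≤ min_{y^n∈𝒴^n} [ H(m(y^n)) + α·d_n(x^n,y^n) ]. -/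
/-- The cyclic `ℓ`-th order empirical distribution of `x^n` (here `ℓ = l + 1`):
`(1/n)·|{1 ≤ i ≤ n : (x_{i−ℓ+1},…,x_i) = a^ℓ}|`. -/
noncomputable def empX {X : Type*} [DecidableEq X] (n : ℕ) [NeZero n] (l : ℕ)
    (x : ZMod n → X) (a : Fin (l + 1) → X) : ℝ :=
  ((Finset.univ.filter (fun i : ZMod n =>
      ∀ j : Fin (l + 1), x (i - (l : ZMod n) + ((j : ℕ) : ZMod n)) = a j)).card : ℝ) / n

/-- The `(k+1)`-th order marginal, with respect to `𝒴`, of a joint distribution `p` on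
`𝒳^ℓ × 𝒴^ℓ` (here `ℓ = l + 1 ≥ k + 1`): `m(p)_{β,b}` is the total `p`-mass of pairs
`(a^ℓ, w^ℓ)` in which the `𝒴`-string `w^ℓ` starts with `(b_1,…,b_k,β)`, i.e.
`m(p)_{β,b} = ∑_{a^ℓ} ∑_{c ∈ 𝒴^{ℓ−k−1}} p(a^ℓ, (b_1,…,b_k,β,c_1,…,c_{ℓ−k−1}))`. -/
noncomputable def mOf {X Y : Type*} [Fintype X] [Fintype Y] [DecidableEq Y]
    (k l : ℕ) (hkl : k ≤ l)
    (p : (Fin (l + 1) → X) → (Fin (l + 1) → Y) → ℝ) (β : Y) (b : Fin k → Y) : ℝ :=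
  ∑ a : Fin (l + 1) → X,
    ∑ w ∈ Finset.univ.filter (fun w : Fin (l + 1) → Y =>
        (∀ j : Fin k, w (Fin.castLE (by omega) j) = b j) ∧ w ⟨k, by omega⟩ = β),
      p a w

/-- The first-order `(X,Y)`-marginal of a joint distribution `p` on `𝒳^ℓ × 𝒴^ℓ`:
`q(p)(a,b) = ∑_{a'∈𝒳^{ℓ−1}, b'∈𝒴^{ℓ−1}} p((a,a'),(b,b'))`. -/
noncomputable def qOf {X Y : Type*} [Fintype X] [Fintype Y] (l : ℕ)
    (p : (Fin (l + 1) → X) → (Fin (l + 1) → Y) → ℝ) (a : X) (b : Y) : ℝ :=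
  ∑ a' : Fin l → X, ∑ b' : Fin l → Y, p (Fin.cons a a') (Fin.cons b b')

section Stmt16Aux

open Finset

lemma vecEnt_nonneg {ι : Type*} [Fintype ι] (v : ι → ℝ) (hv : ∀ i, 0 ≤ v i) :
    0 ≤ vecEnt v := by
  unfold vecEnt
  split
  · exact le_refl _
  · refine Finset.sum_nonneg fun i _ => ?_
    rcases eq_or_lt_of_le (hv i) with h | h
    · simp [← h]
    · have hs : v i ≤ ∑ j, v j := Finset.single_le_sum (fun j _ => hv j) (mem_univ i)
      exact mul_nonneg (div_nonneg (hv i) (h.trans_le hs).le)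
        (Real.log_nonneg ((one_le_div h).mpr hs))

lemma condEnt_nonneg {Y : Type*} [Fintype Y] {k : ℕ} (m : Y → (Fin k → Y) → ℝ)
    (hm : ∀ β b, 0 ≤ m β b) : 0 ≤ condEnt m :=
  Finset.sum_nonneg fun b _ => mul_nonneg (Finset.sum_nonneg fun β _ => hm β b)
    (vecEnt_nonneg _ fun β => hm β b)

/-- A "for all `Fin (l+1)`" statement splits into `castSucc` part and `last` part. -/
lemma forall_iff_snoc {l : ℕ} {P : Fin (l + 1) → Prop} :
    (∀ j, P j) ↔ (∀ j : Fin l, P j.castSucc) ∧ P (Fin.last l) :=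
  ⟨fun h => ⟨fun j => h _, h _⟩, fun h j => Fin.lastCases h.2 h.1 j⟩

/-- The cyclic window of length `l+1` ending at position `i`. -/
def win {A : Type*} (n : ℕ) [NeZero n] (l : ℕ) (x : ZMod n → A) (i : ZMod n)
    (j : Fin (l + 1)) : A := x (i - (l : ZMod n) + ((j : ℕ) : ZMod n))

/-- The empirical joint `(l+1)`-block distribution of the pair sequence `(x, y)`. -/
noncomputable def pEmp {X Y : Type*} [Fintype X] [Fintype Y] [DecidableEq X] [DecidableEq Y]
    (n l : ℕ) [NeZero n] (x : ZMod n → X) (y : ZMod n → Y)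
    (a : Fin (l + 1) → X) (w : Fin (l + 1) → Y) : ℝ :=
  ((Finset.univ.filter
      (fun i : ZMod n => win n l x i = a ∧ win n l y i = w)).card : ℝ) / n

variable {X Y : Type*} [Fintype X] [Fintype Y] [DecidableEq X] [DecidableEq Y]
  (n l : ℕ) [NeZero n] (x : ZMod n → X) (y : ZMod n → Y)

lemma pEmp_nonneg (a : Fin (l + 1) → X) (w : Fin (l + 1) → Y) : 0 ≤ pEmp n l x y a w :=
  div_nonneg (Nat.cast_nonneg _) (Nat.cast_nonneg _)

lemma sum_pEmp :
    ∑ a : Fin (l + 1) → X, ∑ w : Fin (l + 1) → Y, pEmp n l x y a w = 1 := by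
  have hn : (n : ℝ) ≠ 0 := Nat.cast_ne_zero.mpr (NeZero.ne n)
  have key : n = ∑ a : Fin (l + 1) → X, ∑ w : Fin (l + 1) → Y,
      #(univ.filter fun i : ZMod n => win n l x i = a ∧ win n l y i = w) := by
    conv_lhs => rw [← ZMod.card n, ← Finset.card_univ]
    rw [Finset.card_eq_sum_card_fiberwise
        (f := fun i : ZMod n => (win n l x i, win n l y i)) (t := univ)
        (fun i _ => mem_univ _), ← Finset.univ_product_univ, Finset.sum_product]
    simp [Prod.ext_iff]
  simp only [pEmp, ← Finset.sum_div]
  rw [div_eq_one_iff_eq hn]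
  exact_mod_cast key.symm

lemma pEmp_margX (a : Fin (l + 1) → X) :
    ∑ w : Fin (l + 1) → Y, pEmp n l x y a w = empX n l x a := by
  have key : #(univ.filter fun i : ZMod n => win n l x i = a)
      = ∑ w : Fin (l + 1) → Y,
        #(univ.filter fun i : ZMod n => win n l x i = a ∧ win n l y i = w) := by
    rw [Finset.card_eq_sum_card_fiberwise (f := fun i : ZMod n => win n l y i)
        (t := univ) (fun i _ => mem_univ _)]
    refine Finset.sum_congr rfl fun w _ => ?_
    congr 1
    rw [Finset.filter_filter]
  have hfil : (univ.filter fun i : ZMod n => win n l x i = a)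
      = (univ.filter fun i : ZMod n =>
          ∀ j : Fin (l + 1), x (i - (l : ZMod n) + ((j : ℕ) : ZMod n)) = a j) := by
    apply Finset.filter_congr
    intro i _
    simp [win, funext_iff]
  simp only [pEmp, ← Finset.sum_div, empX]
  rw [hfil] at key
  congr 1
  exact_mod_cast key.symm

lemma pEmp_stat (a' : Fin l → X) (b' : Fin l → Y) :
    ∑ a : X, ∑ b : Y, pEmp n l x y (Fin.snoc a' a) (Fin.snoc b' b) =
      ∑ a : X, ∑ b : Y, pEmp n l x y (Fin.cons a a') (Fin.cons b b') := by
  set L : ZMod n := (l : ZMod n) with hL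
  -- the two "pattern" sets for the (l)-blocks
  set s₁ : Finset (ZMod n) := univ.filter fun i : ZMod n =>
    (∀ j : Fin l, x (i - L + ((j : ℕ) : ZMod n)) = a' j) ∧
    (∀ j : Fin l, y (i - L + ((j : ℕ) : ZMod n)) = b' j) with hs₁
  set s₂ : Finset (ZMod n) := univ.filter fun i : ZMod n =>
    (∀ j : Fin l, x (i - L + (((j : ℕ) : ZMod n) + 1)) = a' j) ∧
    (∀ j : Fin l, y (i - L + (((j : ℕ) : ZMod n) + 1)) = b' j) with hs₂
  have hil : ∀ i : ZMod n, i - L + ((l : ℕ) : ZMod n) = i := by intro i; rw [← hL]; ring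
  have key₁ : ∑ a : X, ∑ b : Y, pEmp n l x y (Fin.snoc a' a) (Fin.snoc b' b)
      = (#s₁ : ℝ) / n := by
    have h := Finset.card_eq_sum_card_fiberwise
      (f := fun i : ZMod n => (x i, y i)) (s := s₁) (t := univ) (fun i _ => mem_univ _)
    rw [← Finset.univ_product_univ, Finset.sum_product] at h
    have hnat : ∑ a : X, ∑ b : Y,
        #(univ.filter fun i : ZMod n =>
          win n l x i = Fin.snoc a' a ∧ win n l y i = Fin.snoc b' b) = #s₁ := by
      rw [h]
      refine Finset.sum_congr rfl fun a _ => Finset.sum_congr rfl fun b _ => ?_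
      congr 1
      rw [hs₁, Finset.filter_filter]
      apply Finset.filter_congr
      intro i _
      simp only [win, funext_iff, forall_iff_snoc, Fin.snoc_castSucc, Fin.snoc_last,
        Fin.coe_castSucc, Fin.val_last, Prod.ext_iff, hil i, hL, sub_add_cancel]
      tauto
    simp only [pEmp, ← Finset.sum_div]
    congr 1
    exact_mod_cast hnat
  have key₂ : ∑ a : X, ∑ b : Y, pEmp n l x y (Fin.cons a a') (Fin.cons b b')
      = (#s₂ : ℝ) / n := by
    have h := Finset.card_eq_sum_card_fiberwise
      (f := fun i : ZMod n => (x (i - L), y (i - L))) (s := s₂) (t := univ)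
      (fun i _ => mem_univ _)
    rw [← Finset.univ_product_univ, Finset.sum_product] at h
    have hnat : ∑ a : X, ∑ b : Y,
        #(univ.filter fun i : ZMod n =>
          win n l x i = Fin.cons a a' ∧ win n l y i = Fin.cons b b') = #s₂ := by
      rw [h]
      refine Finset.sum_congr rfl fun a _ => Finset.sum_congr rfl fun b _ => ?_
      congr 1
      rw [hs₂, Finset.filter_filter]
      apply Finset.filter_congr
      intro i _
      simp only [win, funext_iff, Fin.forall_fin_succ, Fin.cons_zero, Fin.cons_succ,
        Fin.val_zero, Fin.val_succ, Prod.ext_iff, Nat.cast_zero, add_zero, Nat.cast_add,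
        Nat.cast_one]
      tauto
    simp only [pEmp, ← Finset.sum_div]
    congr 1
    exact_mod_cast hnat
  have hcard : #s₁ = #s₂ := by
    refine Finset.card_bij' (fun i _ => i - 1) (fun i _ => i + 1) ?_ ?_ ?_ ?_
    · intro i hi
      rw [hs₁, Finset.mem_filter] at hi
      rw [hs₂, Finset.mem_filter]
      refine ⟨mem_univ _, ?_, ?_⟩ <;> intro j <;>
        rw [show i - 1 - L + (((j : ℕ) : ZMod n) + 1) = i - L + ((j : ℕ) : ZMod n) by ring]
      · exact hi.2.1 j
      · exact hi.2.2 j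
    · intro i hi
      rw [hs₂, Finset.mem_filter] at hi
      rw [hs₁, Finset.mem_filter]
      refine ⟨mem_univ _, ?_, ?_⟩ <;> intro j <;>
        rw [show i + 1 - L + ((j : ℕ) : ZMod n) = i - L + (((j : ℕ) : ZMod n) + 1) by ring]
      · exact hi.2.1 j
      · exact hi.2.2 j
    · intro i _; ring
    · intro i _; ring
  rw [key₁, key₂, hcard]

lemma mOf_pEmp (k : ℕ) (hkl : k ≤ l) (β : Y) (b : Fin k → Y) :
    mOf k l hkl (pEmp n l x y) β b = empM n k y β b := by
  set L : ZMod n := (l : ZMod n) with hL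
  set K : ZMod n := (k : ZMod n) with hK
  set T : Finset (Fin (l + 1) → Y) := univ.filter (fun w : Fin (l + 1) → Y =>
      (∀ j : Fin k, w (Fin.castLE (by omega) j) = b j) ∧ w ⟨k, by omega⟩ = β) with hT
  set s₃ : Finset (ZMod n) := univ.filter fun i : ZMod n =>
    (∀ j : Fin k, y (i - L + ((j : ℕ) : ZMod n)) = b j) ∧
      y (i - L + ((k : ℕ) : ZMod n)) = β with hs₃
  have key : mOf k l hkl (pEmp n l x y) β b = (#s₃ : ℝ) / n := by
    have hmaps : ∀ i ∈ s₃, (win n l x i, win n l y i) ∈ (univ ×ˢ T) := by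
      intro i hi
      rw [hs₃, Finset.mem_filter] at hi
      rw [Finset.mem_product, hT, Finset.mem_filter]
      refine ⟨mem_univ _, mem_univ _, fun j => ?_, ?_⟩
      · show y (i - L + (((Fin.castLE (by omega) j : Fin (l + 1)) : ℕ) : ZMod n)) = b j
        rw [Fin.coe_castLE]
        exact hi.2.1 j
      · exact hi.2.2
    have h := Finset.card_eq_sum_card_fiberwise hmaps
    rw [Finset.sum_product] at h
    have hnat : ∑ a : Fin (l + 1) → X, ∑ w ∈ T,
        #(univ.filter fun i : ZMod n => win n l x i = a ∧ win n l y i = w) = #s₃ := by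
      rw [h]
      refine Finset.sum_congr rfl fun a _ => Finset.sum_congr rfl fun w hw => ?_
      congr 1
      rw [hT, Finset.mem_filter] at hw
      ext i
      simp only [hs₃, Finset.mem_filter, Finset.filter_filter, mem_univ, true_and,
        Prod.ext_iff]
      constructor
      · rintro ⟨hx, hy⟩
        refine ⟨⟨fun j => ?_, ?_⟩, hx, hy⟩
        · have := congrFun hy (Fin.castLE (by omega) j)
          rw [hw.2.1 j] at this
          exact this
        · have := congrFun hy (⟨k, by omega⟩ : Fin (l + 1))
          rw [hw.2.2] at this
          exact this
      · exact fun h' => h'.2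
    show (∑ a : Fin (l + 1) → X, ∑ w ∈ T, pEmp n l x y a w) = _
    simp only [pEmp, ← Finset.sum_div]
    congr 1
    exact_mod_cast hnat
  rw [key]
  unfold empM
  congr 1
  rw [← hK]
  have : #s₃ = #(univ.filter fun i : ZMod n =>
      y i = β ∧ ∀ j : Fin k, y (i - K + ((j : ℕ) : ZMod n)) = b j) := by
    refine Finset.card_bij' (fun i _ => i - L + K) (fun i _ => i + L - K) ?_ ?_ ?_ ?_
    · intro i hi
      rw [hs₃, Finset.mem_filter] at hi
      rw [Finset.mem_filter]
      refine ⟨mem_univ _, hi.2.2, fun j => ?_⟩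
      show y (i - L + K - K + ((j : ℕ) : ZMod n)) = b j
      rw [show i - L + K - K + ((j : ℕ) : ZMod n) = i - L + ((j : ℕ) : ZMod n) by ring]
      exact hi.2.1 j
    · intro i hi
      rw [Finset.mem_filter] at hi
      rw [hs₃, Finset.mem_filter]
      refine ⟨mem_univ _, fun j => ?_, ?_⟩
      · show y (i + L - K - L + ((j : ℕ) : ZMod n)) = b j
        rw [show i + L - K - L + ((j : ℕ) : ZMod n) = i - K + ((j : ℕ) : ZMod n) by ring]
        exact hi.2.2 j
      · show y (i + L - K - L + ((k : ℕ) : ZMod n)) = β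
        rw [show i + L - K - L + ((k : ℕ) : ZMod n) = i by rw [← hK]; ring]
        exact hi.2.1
    · intro i _; ring
    · intro i _; ring
  rw [this]

lemma qOf_pEmp (a : X) (b : Y) :
    qOf l (pEmp n l x y) a b
      = (#(univ.filter fun i : ZMod n =>
            x (i - (l : ZMod n)) = a ∧ y (i - (l : ZMod n)) = b) : ℝ) / n := by
  set L : ZMod n := (l : ZMod n) with hL
  set s₄ : Finset (ZMod n) := univ.filter fun i : ZMod n =>
    x (i - L) = a ∧ y (i - L) = b with hs₄
  have h := Finset.card_eq_sum_card_fiberwise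
    (f := fun i : ZMod n =>
      ((fun j : Fin l => x (i - L + (((j : ℕ) : ZMod n) + 1))),
       (fun j : Fin l => y (i - L + (((j : ℕ) : ZMod n) + 1)))))
    (s := s₄) (t := univ) (fun i _ => mem_univ _)
  rw [← Finset.univ_product_univ, Finset.sum_product] at h
  have hnat : ∑ a' : Fin l → X, ∑ b' : Fin l → Y,
      #(univ.filter fun i : ZMod n =>
        win n l x i = Fin.cons a a' ∧ win n l y i = Fin.cons b b') = #s₄ := by
    rw [h]
    refine Finset.sum_congr rfl fun a' _ => Finset.sum_congr rfl fun b' _ => ?_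
    congr 1
    rw [hs₄, Finset.filter_filter]
    apply Finset.filter_congr
    intro i _
    simp only [win, funext_iff, Fin.forall_fin_succ, Fin.cons_zero, Fin.cons_succ,
      Fin.val_zero, Fin.val_succ, Prod.ext_iff, Nat.cast_zero, add_zero, Nat.cast_add,
      Nat.cast_one]
    tauto
  unfold qOf
  simp only [pEmp, ← Finset.sum_div]
  congr 1
  exact_mod_cast hnat

lemma dist_pEmp (d : X → Y → ℝ) :
    ∑ a : X, ∑ b : Y, d a b * qOf l (pEmp n l x y) a b = distn n d x y := by
  set L : ZMod n := (l : ZMod n) with hL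
  have hre : ∑ i : ZMod n, d (x (i - L)) (y (i - L)) = ∑ i : ZMod n, d (x i) (y i) :=
    Fintype.sum_equiv (Equiv.subRight L) _ _ (fun i => rfl)
  have h := Finset.sum_fiberwise_of_maps_to
    (g := fun i : ZMod n => (x (i - L), y (i - L))) (s := univ) (t := univ)
    (fun i _ => mem_univ _) (fun i => d (x (i - L)) (y (i - L)))
  rw [← Finset.univ_product_univ, Finset.sum_product] at h
  unfold distn
  rw [← hre, ← h]
  simp only [qOf_pEmp, ← hL]
  rw [Finset.sum_div]
  refine Finset.sum_congr rfl fun a _ => ?_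
  rw [Finset.sum_div]
  refine Finset.sum_congr rfl fun b _ => ?_
  have hS : (univ.filter fun i : ZMod n => (x (i - L), y (i - L)) = (a, b))
      = univ.filter fun i : ZMod n => x (i - L) = a ∧ y (i - L) = b := by
    apply Finset.filter_congr
    intro i _
    simp [Prod.ext_iff]
  have hsum : ∑ i ∈ (univ.filter fun i : ZMod n => x (i - L) = a ∧ y (i - L) = b),
      d (x (i - L)) (y (i - L))
      = d a b * #(univ.filter fun i : ZMod n => x (i - L) = a ∧ y (i - L) = b) := by
    have hcongr : ∀ i ∈ (univ.filter fun i : ZMod n => x (i - L) = a ∧ y (i - L) = b),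
        d (x (i - L)) (y (i - L)) = d a b := by
      intro i hi
      rw [Finset.mem_filter] at hi
      rw [hi.2.1, hi.2.2]
    rw [Finset.sum_congr rfl hcongr, Finset.sum_const, nsmul_eq_mul, mul_comm]
  rw [hS, hsum, mul_div_assoc']

end Stmt16Aux

/-- the continuous relaxation lower-bounds the discrete optimum,
`Ĉ*_n ≤ C*_n`: the infimum over the set `𝓜` of jointly stationary pmfs on `𝒳^ℓ × 𝒴^ℓ`
consistent with the cyclic `ℓ`-th order empirical distribution of `x^n` of
`H(m(p)) + α·∑_{a,b} d(a,b)·q(p)(a,b)` is at most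
`min_{y^n} [H(m(y^n)) + α·d_n(x^n,y^n)]`. -/
theorem stmt16 {X Y : Type*} [Fintype X] [Fintype Y] [Nonempty X] [Nonempty Y]
    [DecidableEq X] [DecidableEq Y]
    (n k l : ℕ) [NeZero n] (hk : 0 < k) (hkl : k ≤ l)
    (x : ZMod n → X) (α : ℝ) (hα : 0 ≤ α)
    (d : X → Y → ℝ) (hd : ∀ a b, 0 ≤ d a b) :
    sInf ((fun p : (Fin (l + 1) → X) → (Fin (l + 1) → Y) → ℝ =>
        condEnt (mOf k l hkl p) + α * ∑ a : X, ∑ b : Y, d a b * qOf l p a b) ''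
      {p | (∀ a b, 0 ≤ p a b) ∧
           (∑ a : Fin (l + 1) → X, ∑ b : Fin (l + 1) → Y, p a b = 1) ∧
           (∀ (a' : Fin l → X) (b' : Fin l → Y),
             ∑ a : X, ∑ b : Y, p (Fin.snoc a' a) (Fin.snoc b' b) =
               ∑ a : X, ∑ b : Y, p (Fin.cons a a') (Fin.cons b b')) ∧
           (∀ a : Fin (l + 1) → X,
             ∑ b : Fin (l + 1) → Y, p a b = empX n l x a)}) ≤
      ⨅ y : ZMod n → Y, energy n k x α d y := by
  classical
  refine le_ciInf fun y => ?_
  refine csInf_le ?_ ?_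
  · refine ⟨0, ?_⟩
    rintro r ⟨p, ⟨hp0, -, -, -⟩, rfl⟩
    have h1 : 0 ≤ condEnt (mOf k l hkl p) := by
      refine condEnt_nonneg _ fun β b => ?_
      unfold mOf
      exact Finset.sum_nonneg fun a _ => Finset.sum_nonneg fun w _ => hp0 a w
    have h2 : 0 ≤ ∑ a : X, ∑ b : Y, d a b * qOf l p a b := by
      refine Finset.sum_nonneg fun a _ => Finset.sum_nonneg fun b _ =>
        mul_nonneg (hd a b) ?_
      exact Finset.sum_nonneg fun a' _ => Finset.sum_nonneg fun b' _ => hp0 _ _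
    exact add_nonneg h1 (mul_nonneg hα h2)
  · refine ⟨pEmp n l x y, ⟨fun a w => pEmp_nonneg n l x y a w, sum_pEmp n l x y,
      pEmp_stat n l x y, pEmp_margX n l x y⟩, ?_⟩
    have hm : mOf k l hkl (pEmp n l x y) = fun β b => empM n k y β b := by
      funext β b
      exact mOf_pEmp n l x y k hkl β b
    show condEnt (mOf k l hkl (pEmp n l x y)) + α * _ = energy n k x α d y
    rw [hm, dist_pEmp n l x y d, energy]
end
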